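/- Let F be a set of functions X → [0,1] containing f⋆, and let x_t ∈ X, y_t ∈ [0,1], Q_t ∈ {0,1} for t ∈ ℕ be given. Set M_t(f) := Q_t·((f(x_t) − y_t)² − (f⋆(x_t) − y_t)²) and e_t(f) := Q_t·(f(x_t) − f⋆(x_t))². Assume, for a constant C > 0, that for every f ∈ F and every τ ∈ ℕ: Σ_{t=1}^{τ} M_t(f) ≤ (3/2)·Σ_{t=1}^{τ} e_t(f) + C and Σ_{t=1}^{τ} e_t(f) ≤ 2·Σ_{t=1}^{τ} M_t(f) + C. Define R̂_τ(f) := Σ_{t<τ} Q_t·(f(x_t) − y_t)², let f̂_τ ∈ F be a minimizer of R̂_τ over F (assumed to exist), set β := C/2, and F_τ := {f ∈ F : R̂_τ(f) ≤ R̂_τ(f̂_τ) + β}. Then for every τ ∈ ℕ: (1) f⋆ ∈ F_τ; (2) every f ∈ F_τ satisfies Σ_{t<τ} e_t(f) ≤ 2C, i.e., Σ_{t<τ} Q_t·(f(x_t) − f⋆(x_t))² ≤ 4β. -/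

import Mathlib

/-- Deterministic properties of the per-round active sets of the
constant-label-complexity algorithm, on the anytime concentration event.
`M_t(f) = Q_t·((f(x_t) - y_t)² - (f⋆(x_t) - y_t)²)` and
`e_t(f) = Q_t·(f(x_t) - f⋆(x_t))²` satisfy the two anytime inequalities with constant
`C`; `R̂_τ(f) = Σ_{t<τ} Q_t (f(x_t) - y_t)²`, `f̂_τ` minimizes `R̂_τ` over `F`,
`β = C/2`, and `F_τ = {f ∈ F | R̂_τ(f) ≤ R̂_τ(f̂_τ) + β}`.  Then for every `τ`:
(1) `f⋆ ∈ F_τ`; (2) every `f ∈ F_τ` satisfies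
`Σ_{t<τ} Q_t·(f(x_t) - f⋆(x_t))² ≤ 2C = 4β`. -/
theorem stmt_19 {X : Type*} (F : Set (X → ℝ)) (fstar : X → ℝ) (hstar : fstar ∈ F)
    (hFb : ∀ f ∈ F, ∀ z, f z ∈ Set.Icc (0 : ℝ) 1)
    (x : ℕ → X) (y Q : ℕ → ℝ) (hy : ∀ t, y t ∈ Set.Icc (0 : ℝ) 1)
    (hQ : ∀ t, Q t = 0 ∨ Q t = 1)
    (C : ℝ) (hC : 0 < C)
    (hconc : ∀ f ∈ F, ∀ τ : ℕ,
      ((∑ t ∈ Finset.Icc 1 τ,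
          Q t * ((f (x t) - y t) ^ 2 - (fstar (x t) - y t) ^ 2))
        ≤ (3 / 2) * (∑ t ∈ Finset.Icc 1 τ, Q t * (f (x t) - fstar (x t)) ^ 2) + C)
      ∧ ((∑ t ∈ Finset.Icc 1 τ, Q t * (f (x t) - fstar (x t)) ^ 2)
        ≤ 2 * (∑ t ∈ Finset.Icc 1 τ,
            Q t * ((f (x t) - y t) ^ 2 - (fstar (x t) - y t) ^ 2)) + C))
    (Rhat : ℕ → (X → ℝ) → ℝ)
    (hRhat : ∀ τ f, Rhat τ f = ∑ t ∈ Finset.Ico 1 τ, Q t * (f (x t) - y t) ^ 2)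
    (fhat : ℕ → (X → ℝ)) (hfhatF : ∀ τ, fhat τ ∈ F)
    (hfhatmin : ∀ τ, ∀ f ∈ F, Rhat τ (fhat τ) ≤ Rhat τ f)
    (β : ℝ) (hβ : β = C / 2)
    (Fτ : ℕ → Set (X → ℝ))
    (hFτ : ∀ τ, Fτ τ = {f ∈ F | Rhat τ f ≤ Rhat τ (fhat τ) + β}) :
    ∀ τ : ℕ, fstar ∈ Fτ τ
      ∧ ∀ f ∈ Fτ τ,
          (∑ t ∈ Finset.Ico 1 τ, Q t * (f (x t) - fstar (x t)) ^ 2 ≤ 2 * C)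
          ∧ (∑ t ∈ Finset.Ico 1 τ, Q t * (f (x t) - fstar (x t)) ^ 2 ≤ 4 * β) := by
  intro τ
  have hIco : ∀ f ∈ F,
      (∑ t ∈ Finset.Ico 1 τ, Q t * (f (x t) - fstar (x t)) ^ 2)
        ≤ 2 * (∑ t ∈ Finset.Ico 1 τ,
            Q t * ((f (x t) - y t) ^ 2 - (fstar (x t) - y t) ^ 2)) + C := by
    intro f hf
    rcases Nat.eq_zero_or_pos τ with h0 | h1
    · subst h0; simpa using (hconc f hf 0).2
    · have hs : Finset.Ico 1 τ = Finset.Icc 1 (τ - 1) := by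
        rw [← Finset.Ico_add_one_right_eq_Icc, Nat.sub_add_cancel (n := τ) (m := 1) h1]
      rw [hs]; exact (hconc f hf (τ - 1)).2
  have hM : ∀ f : X → ℝ, ∑ t ∈ Finset.Ico 1 τ,
      Q t * ((f (x t) - y t) ^ 2 - (fstar (x t) - y t) ^ 2)
      = Rhat τ f - Rhat τ fstar := by
    intro f
    rw [hRhat, hRhat, ← Finset.sum_sub_distrib]
    exact Finset.sum_congr rfl fun t _ => by ring
  have he0 : ∀ f : X → ℝ, 0 ≤ ∑ t ∈ Finset.Ico 1 τ, Q t * (f (x t) - fstar (x t)) ^ 2 :=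
    fun f => Finset.sum_nonneg fun t _ =>
      mul_nonneg (by rcases hQ t with h | h <;> simp [h]) (sq_nonneg _)
  have hMf := hIco (fhat τ) (hfhatF τ)
  rw [hM (fhat τ)] at hMf
  have hstar_mem : fstar ∈ Fτ τ := by
    rw [hFτ]
    exact ⟨hstar, by linarith [he0 (fhat τ)]⟩
  refine ⟨hstar_mem, fun f hf => ?_⟩
  rw [hFτ] at hf
  obtain ⟨hfF, hfle⟩ := hf
  have h2 := hIco f hfF
  rw [hM f] at h2
  have hmin := hfhatmin τ fstar hstar
  constructor <;> linarith
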